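/- arXiv:2310.17611 — 5 statements merged into one kernel-verified Lean document; each statement's English description precedes it below -/
import Mathlib

section
/- Let V be a finite collection of vectors in ℝ^d and ⫫ the partial orthogonality independence model. Then ⫫ satisfies the weak union axiom: if A ⫫ (B ∪ D) | C, then A ⫫ B | (C ∪ D), for disjoint subsets A, B, C, D of V. -/
noncomputable def resid {E : Type*} [NormedAddCommGroup E] [InnerProductSpace ℝ E]
    [FiniteDimensional ℝ E] (C : Set E) (v : E) : E :=
  v - (Submodule.orthogonalProjectionOnto (Submodule.span ℝ C) v : E)

/-- Partial orthogonality: `A ⫫ B | C` iff for all `a ∈ A`, `b ∈ B`, the residuals of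
`a` and `b` after orthogonal projection onto the span of `C` are orthogonal. -/
def pOrth {d : ℕ} (A B C : Finset (EuclideanSpace ℝ (Fin d))) : Prop :=
  ∀ a ∈ A, ∀ b ∈ B,
    inner ℝ (resid (C : Set (EuclideanSpace ℝ (Fin d))) a)
      (resid (C : Set (EuclideanSpace ℝ (Fin d))) b) = (0 : ℝ)

lemma resid_inner_left {E : Type*} [NormedAddCommGroup E] [InnerProductSpace ℝ E]
    [FiniteDimensional ℝ E] (C : Set E) (v w : E) (hw : w ∈ Submodule.span ℝ C) :
    inner ℝ (resid C v) w = (0 : ℝ) := by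
  simp only [resid]
  exact Submodule.starProjection_inner_eq_zero v w hw

/-- Partial orthogonality satisfies the weak union axiom. -/
theorem partial_orthogonality_weak_union {d : ℕ}
    [DecidableEq (EuclideanSpace ℝ (Fin d))]
    (V A B C D : Finset (EuclideanSpace ℝ (Fin d)))
    (hA : A ⊆ V) (hB : B ⊆ V) (hC : C ⊆ V) (hD : D ⊆ V)
    (hAB : Disjoint A B) (hAC : Disjoint A C) (hAD : Disjoint A D)
    (hBC : Disjoint B C) (hBD : Disjoint B D) (hCD : Disjoint C D)
    (h : pOrth A (B ∪ D) C) : pOrth A B (C ∪ D) := by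
  intro a ha b hb
  set K := Submodule.span ℝ ((↑(C ∪ D) : Set (EuclideanSpace ℝ (Fin d))))
  -- resid C a is orthogonal to K
  have horth : resid (↑C) a ∈ Kᗮ := by
    rw [Submodule.mem_orthogonal]
    intro u hu
    induction hu using Submodule.span_induction with
    | mem x hx =>
      rw [Finset.coe_union, Set.mem_union] at hx
      rcases hx with hx | hx
      · rw [real_inner_comm]
        exact resid_inner_left _ a x (Submodule.subset_span hx)
      · have hd := h a ha x (Finset.mem_union_right _ hx)
        have : inner ℝ (resid (↑C) a) (x : EuclideanSpace ℝ (Fin d)) = (0 : ℝ) := by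
          have hx2 : (x : EuclideanSpace ℝ (Fin d)) =
              resid (↑C) x + (Submodule.orthogonalProjectionOnto (Submodule.span ℝ (↑C : Set _)) x :
                EuclideanSpace ℝ (Fin d)) := by
            simp [resid]
          rw [hx2, inner_add_right, hd,
            resid_inner_left _ a _ (Submodule.orthogonalProjectionOnto (Submodule.span ℝ (↑C : Set _)) x).2]
          ring
        rw [real_inner_comm]; exact this
    | zero => simp
    | add x y hx hy ihx ihy => rw [inner_add_left, ihx, ihy]; ring
    | smul c x hx ihx => rw [inner_smul_left, ihx]; simp
  -- hence resid (C ∪ D) a = resid C a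
  have hproj : (Submodule.orthogonalProjectionOnto K a : EuclideanSpace ℝ (Fin d)) =
      (Submodule.orthogonalProjectionOnto (Submodule.span ℝ (↑C : Set _)) a : EuclideanSpace ℝ (Fin d)) := by
    rw [← Submodule.starProjection_apply]
    apply Submodule.eq_starProjection_of_mem_orthogonal
    · have : Submodule.span ℝ (↑C : Set (EuclideanSpace ℝ (Fin d))) ≤ K := by
        apply Submodule.span_mono
        rw [Finset.coe_union]; exact Set.subset_union_left
      exact this (Submodule.orthogonalProjectionOnto _ a).2
    · exact horth
  have hra : resid (↑(C ∪ D)) a = resid (↑C) a := by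
    simp only [resid, K] at hproj ⊢
    rw [hproj]
  rw [hra]
  -- now inner (resid C a) (resid (C∪D) b) = inner (resid C a) b = 0
  have hb' : resid (↑(C ∪ D)) b = b - (Submodule.orthogonalProjectionOnto K b : EuclideanSpace ℝ (Fin d)) := rfl
  rw [hb', inner_sub_right]
  have h1 : inner ℝ (resid (↑C) a) (Submodule.orthogonalProjectionOnto K b : EuclideanSpace ℝ (Fin d)) = (0 : ℝ) := by
    rw [real_inner_comm]
    exact (Submodule.mem_orthogonal _ _).1 horth _ (Submodule.orthogonalProjectionOnto K b).2
  have h2 : inner ℝ (resid (↑C) a) b = (0 : ℝ) := by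
    have hbd := h a ha b (Finset.mem_union_left _ hb)
    have hb2 : b = resid (↑C) b +
        (Submodule.orthogonalProjectionOnto (Submodule.span ℝ (↑C : Set _)) b : EuclideanSpace ℝ (Fin d)) := by
      simp [resid]
    rw [hb2, inner_add_right, hbd,
      resid_inner_left _ a _ (Submodule.orthogonalProjectionOnto (Submodule.span ℝ (↑C : Set _)) b).2]
    ring
  rw [h1, h2]; ring
end

section
/- Let V be a finite collection of vectors in ℝ^d and ⫫ the partial orthogonality independence model. Then ⫫ satisfies the contraction axiom: if A ⫫ B | C and A ⫫ D | (B ∪ C), then A ⫫ (B ∪ D) | C, for disjoint subsets A, B, C, D of V. -/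
lemma resid_mem_orthogonal {E : Type*} [NormedAddCommGroup E] [InnerProductSpace ℝ E]
    [FiniteDimensional ℝ E] (C : Set E) (v : E) :
    resid C v ∈ (Submodule.span ℝ C)ᗮ :=
  Submodule.sub_starProjection_mem_orthogonal v

lemma mem_orthogonal_span_of_forall {E : Type*} [NormedAddCommGroup E]
    [InnerProductSpace ℝ E] (s : Set E) (v : E)
    (h : ∀ x ∈ s, inner ℝ v x = (0 : ℝ)) : v ∈ (Submodule.span ℝ s)ᗮ := by
  rw [Submodule.mem_orthogonal]
  intro u hu
  have hle : Submodule.span ℝ s ≤ LinearMap.ker (innerSL ℝ v).toLinearMap := by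
    rw [Submodule.span_le]
    intro x hx
    simpa using h x hx
  have := hle hu
  simpa [real_inner_comm] using this

lemma contraction_aux {E : Type*} [NormedAddCommGroup E] [InnerProductSpace ℝ E]
    [FiniteDimensional ℝ E] [DecidableEq E] (A B C D : Finset E)
    (h1 : ∀ a ∈ A, ∀ b ∈ B, inner ℝ (resid (C : Set E) a) (resid (C : Set E) b) = (0 : ℝ))
    (h2 : ∀ a ∈ A, ∀ b ∈ D, inner ℝ (resid ((B ∪ C : Finset E) : Set E) a)
      (resid ((B ∪ C : Finset E) : Set E) b) = (0 : ℝ)) :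
    ∀ a ∈ A, ∀ x ∈ B ∪ D,
      inner ℝ (resid (C : Set E) a) (resid (C : Set E) x) = (0 : ℝ) := by
  set K : Submodule ℝ E := Submodule.span ℝ (C : Set E) with hK
  set L : Submodule ℝ E := Submodule.span ℝ ((B ∪ C : Finset E) : Set E) with hL
  have hKL : K ≤ L := Submodule.span_mono (by
    intro x hx
    simp only [Finset.coe_union, Set.mem_union]
    exact Or.inr hx)
  intro a ha x hx
  have horth : ∀ v z : E, z ∈ K → inner ℝ (resid (C : Set E) v) z = (0 : ℝ) := by
    intro v z hz
    have := (Submodule.mem_orthogonal K (resid (C : Set E) v)).1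
      (resid_mem_orthogonal _ v) z hz
    simpa [real_inner_comm] using this
  have hkey : resid (C : Set E) a ∈ Lᗮ := by
    apply mem_orthogonal_span_of_forall
    intro y hy
    rcases Finset.mem_union.mp (by exact_mod_cast hy) with hyB | hyC
    · have h0 := h1 a ha y hyB
      have hproj : inner ℝ (resid (C : Set E) a)
          ((Submodule.orthogonalProjectionOnto K y : E)) = (0 : ℝ) :=
        horth a _ (Submodule.orthogonalProjectionOnto K y).2
      have hdecomp : (y : E) = resid (C : Set E) y + (Submodule.orthogonalProjectionOnto K y : E) := by
        simp [resid, hK]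
      rw [hdecomp, inner_add_right, h0, hproj, add_zero]
    · exact horth a y (Submodule.subset_span (by exact_mod_cast hyC))
  have hres : resid ((B ∪ C : Finset E) : Set E) a = resid (C : Set E) a := by
    unfold resid
    have : (Submodule.orthogonalProjectionOnto L a : E) = _ := Submodule.eq_starProjection_of_mem_orthogonal (K := L)
      (u := a) (v := (Submodule.orthogonalProjectionOnto K a : E))
      (hKL (Submodule.orthogonalProjectionOnto K a).2) hkey
    show a - (Submodule.orthogonalProjectionOnto L a : E) = a - (Submodule.orthogonalProjectionOnto K a : E)
    rw [this]
  rcases Finset.mem_union.mp hx with hxB | hxD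
  · exact h1 a ha x hxB
  · have h0 := h2 a ha x hxD
    have hmemL : ∀ z ∈ L, inner ℝ (resid (C : Set E) a) z = (0 : ℝ) := by
      intro z hz
      have := (Submodule.mem_orthogonal L (resid (C : Set E) a)).1 hkey z hz
      simpa [real_inner_comm] using this
    have hmemL' : ∀ z ∈ L,
        (inner ℝ (a - (Submodule.orthogonalProjectionOnto (Submodule.span ℝ (C : Set E)) a : E)) z : ℝ)
          = 0 := hmemL
    have e1 : (inner ℝ (resid (C : Set E) a) (resid (C : Set E) x) : ℝ)
        = inner ℝ (resid (C : Set E) a) (x : E) := by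
      unfold resid
      rw [inner_sub_right,
        hmemL' _ (hKL (Submodule.orthogonalProjectionOnto (Submodule.span ℝ (C : Set E)) x).2), sub_zero]
    have e2 : (inner ℝ (resid (C : Set E) a)
          (resid ((B ∪ C : Finset E) : Set E) x) : ℝ)
        = inner ℝ (resid (C : Set E) a) (x : E) := by
      unfold resid
      rw [inner_sub_right,
        hmemL' _ (Submodule.coe_mem
          (Submodule.orthogonalProjectionOnto (Submodule.span ℝ ((B ∪ C : Finset E) : Set E)) x)),
        sub_zero]
    rw [e1, ← e2, ← hres]
    exact h0

/-- Partial orthogonality satisfies the contraction axiom. -/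
theorem partial_orthogonality_contraction {d : ℕ}
    [DecidableEq (EuclideanSpace ℝ (Fin d))]
    (V A B C D : Finset (EuclideanSpace ℝ (Fin d)))
    (hA : A ⊆ V) (hB : B ⊆ V) (hC : C ⊆ V) (hD : D ⊆ V)
    (hAB : Disjoint A B) (hAC : Disjoint A C) (hAD : Disjoint A D)
    (hBC : Disjoint B C) (hBD : Disjoint B D) (hCD : Disjoint C D)
    (h1 : pOrth A B C) (h2 : pOrth A D (B ∪ C)) : pOrth A (B ∪ D) C :=
  contraction_aux A B C D h1 h2
end

section
/- For any finite simple graph G on n vertices, the set of real numbers ε that fail to be a perfect perturbation factor for G is finite; equivalently, all but finitely many ε ∈ ℝ are perfect perturbation factors for G. -/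
open Matrix Polynomial

set_option linter.unusedSectionVars false

/-- `C` separates `a` and `b` in the graph `G`. -/
def gsep {V : Type*} (G : SimpleGraph V) (a b : V) (C : Finset V) : Prop :=
  ∀ p : G.Walk a b, ∃ c ∈ C, c ∈ p.support

/-- `ε` is a perfect perturbation factor for the graph `G`: `I + ε·Adj(G)` is invertible and,
for every index set `I`, the `(i,j)` entry of the inverse of the principal submatrix of
`I + ε·Adj(G)` indexed by `I` vanishes iff `i` and `j` are separated in `G` by the vertices
outside `I`. -/
def IsPerfectPerturbation {n : ℕ} (G : SimpleGraph (Fin n)) [DecidableRel G.Adj] (ε : ℝ) : Prop :=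
  IsUnit ((1 : Matrix (Fin n) (Fin n) ℝ) + ε • G.adjMatrix ℝ).det ∧
  ∀ (I : Finset (Fin n)) (i j : Fin n) (hi : i ∈ I) (hj : j ∈ I), i ≠ j →
    ((((1 : Matrix (Fin n) (Fin n) ℝ) + ε • G.adjMatrix ℝ).submatrix
        (fun a : {x // x ∈ I} => (a : Fin n)) (fun a : {x // x ∈ I} => (a : Fin n)))⁻¹
        ⟨i, hi⟩ ⟨j, hj⟩ = 0
      ↔ gsep G i j (Finset.univ \ I))

section MatrixAux

variable {m : Type*} [Fintype m] [DecidableEq m]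

/-- auxiliary polynomial matrix `1 + X • A`. -/
noncomputable def pmat (A : Matrix m m ℝ) : Matrix m m ℝ[X] :=
  1 + (X : ℝ[X]) • A.map C

lemma pmat_map_eval (A : Matrix m m ℝ) (ε : ℝ) :
    (pmat A).map (eval ε) = 1 + ε • A := by
  ext a b
  simp only [pmat, Matrix.map_apply, Matrix.add_apply, Matrix.smul_apply, Matrix.one_apply,
    smul_eq_mul, eval_add, eval_mul, eval_X, eval_C]
  split <;> simp

lemma eval_matrix_det (M : Matrix m m ℝ[X]) (ε : ℝ) :
    eval ε M.det = (M.map (eval ε)).det := by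
  simpa [RingHom.mapMatrix_apply, coe_evalRingHom] using RingHom.map_det (evalRingHom ε) M

lemma eval_matrix_adjugate (M : Matrix m m ℝ[X]) (ε : ℝ) :
    (M.adjugate).map (eval ε) = (M.map (eval ε)).adjugate := by
  simpa [RingHom.mapMatrix_apply, coe_evalRingHom] using RingHom.map_adjugate (evalRingHom ε) M

lemma pmat_det_ne_zero (A : Matrix m m ℝ) : (pmat A).det ≠ 0 := by
  intro h
  have h0 : eval 0 (pmat A).det = 1 := by
    rw [eval_matrix_det, pmat_map_eval]
    simp
  rw [h] at h0
  simp at h0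

/-- the formal Neumann series `∑ (-X)^k A^k`, entrywise. -/
noncomputable def psB (A : Matrix m m ℝ) : Matrix m m (PowerSeries ℝ) :=
  Matrix.of fun a b => PowerSeries.mk fun k => (-1 : ℝ) ^ k * (A ^ k) a b

lemma pmat_coe (A : Matrix m m ℝ) :
    (pmat A).map (Polynomial.coeToPowerSeries.ringHom) =
      1 + (PowerSeries.X : PowerSeries ℝ) • A.map (PowerSeries.C (R := ℝ)) := by
  ext a b
  simp only [pmat, Matrix.map_apply, Matrix.add_apply, Matrix.smul_apply, Matrix.one_apply,
    smul_eq_mul, map_add, _root_.map_mul, coeToPowerSeries.ringHom_apply, Polynomial.coe_X,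
    Polynomial.coe_C]
  split <;> simp [mul_comm]

lemma pmat_coe_mul_psB (A : Matrix m m ℝ) :
    ((pmat A).map (Polynomial.coeToPowerSeries.ringHom)) * psB A = 1 := by
  rw [pmat_coe]
  ext a b k
  rw [Matrix.mul_apply, map_sum]
  have hterm : ∀ c : m,
      (PowerSeries.coeff (R := ℝ) k) ((((1 : Matrix m m (PowerSeries ℝ))
          + (PowerSeries.X : PowerSeries ℝ) • A.map (PowerSeries.C (R := ℝ))) a c) * psB A c b)
        = (if a = c then (-1 : ℝ) ^ k * (A ^ k) c b else 0)
          + (if k = 0 then 0 else A a c * ((-1 : ℝ) ^ (k-1) * (A ^ (k-1)) c b)) := by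
    intro c
    simp only [Matrix.add_apply, Matrix.one_apply, Matrix.smul_apply, Matrix.map_apply,
      smul_eq_mul, add_mul, map_add]
    congr 1
    · split
      · simp [psB, PowerSeries.coeff_mk]
      · simp
    · rw [mul_assoc]
      cases k with
      | zero => simp [PowerSeries.coeff_zero_X_mul]
      | succ k =>
        rw [PowerSeries.coeff_succ_X_mul, PowerSeries.coeff_C_mul]
        simp [psB, PowerSeries.coeff_mk]
  rw [Finset.sum_congr rfl (fun c _ => hterm c)]
  rw [Finset.sum_add_distrib]
  cases k with
  | zero =>
    simp only [if_pos rfl, Finset.sum_ite_eq, Finset.mem_univ, if_true, Finset.sum_const_zero,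
      add_zero, pow_zero, one_mul]
    simp [Matrix.one_apply, PowerSeries.coeff_zero_eq_constantCoeff]
  | succ k =>
    have h1 : ∑ c, (if a = c then (-1 : ℝ) ^ (k+1) * (A ^ (k+1)) c b else 0)
        = (-1 : ℝ) ^ (k+1) * (A ^ (k+1)) a b := by
      simp [Finset.sum_ite_eq]
    have h2 : ∑ c, (if k + 1 = 0 then 0 else A a c * ((-1 : ℝ) ^ k * (A ^ k) c b))
        = (-1 : ℝ) ^ k * (A ^ (k+1)) a b := by
      simp only [Nat.succ_ne_zero, if_false]
      rw [pow_succ' A k, Matrix.mul_apply, Finset.mul_sum]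
      congr 1; ext c; ring
    rw [show k + 1 - 1 = k from rfl, h1, h2]
    have : (1 : Matrix m m (PowerSeries ℝ)) a b = PowerSeries.C (R := ℝ) ((1 : Matrix m m ℝ) a b) := by
      simp [Matrix.one_apply, apply_ite]
    rw [this, PowerSeries.coeff_C]
    simp [pow_succ]

lemma adjugate_pmat_eq_zero_iff (A : Matrix m m ℝ) (a b : m) :
    (pmat A).adjugate a b = 0 ↔ ∀ k, (A ^ k) a b = 0 := by
  set N := (pmat A).map (Polynomial.coeToPowerSeries.ringHom) with hN
  have hNB : N * psB A = 1 := pmat_coe_mul_psB A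
  have hadj : N.adjugate = N.det • psB A := by
    calc N.adjugate = N.adjugate * (N * psB A) := by rw [hNB, mul_one]
    _ = (N.adjugate * N) * psB A := by rw [mul_assoc]
    _ = (N.det • 1) * psB A := by rw [Matrix.adjugate_mul]
    _ = N.det • psB A := by rw [Matrix.smul_mul, one_mul]
  have hdet : N.det ≠ 0 := by
    intro h
    have hmap1 : N.map (PowerSeries.constantCoeff (R := ℝ)) = 1 := by
      rw [hN, pmat_coe]
      ext a b
      simp only [Matrix.map_apply, Matrix.add_apply, Matrix.one_apply, Matrix.smul_apply,
        smul_eq_mul, map_add, _root_.map_mul, PowerSeries.constantCoeff_X, zero_mul,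
        add_zero, apply_ite (PowerSeries.constantCoeff (R := ℝ)), _root_.map_one, _root_.map_zero]
    have h0 : PowerSeries.constantCoeff (R := ℝ) N.det = 1 := by
      rw [RingHom.map_det, RingHom.mapMatrix_apply, hmap1, det_one]
    rw [h, map_zero] at h0
    exact zero_ne_one h0
  have hmap : Polynomial.coeToPowerSeries.ringHom ((pmat A).adjugate a b)
      = N.det * psB A a b := by
    have h2 : ((pmat A).adjugate).map (Polynomial.coeToPowerSeries.ringHom) = N.adjugate := by
      simpa [RingHom.mapMatrix_apply] using
        RingHom.map_adjugate (Polynomial.coeToPowerSeries.ringHom (R := ℝ)) (pmat A)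
    have h3 := congrArg (fun M : Matrix m m (PowerSeries ℝ) => M a b) h2
    simp only [Matrix.map_apply] at h3
    rw [h3, hadj, Matrix.smul_apply, smul_eq_mul]
  constructor
  · intro h k
    rw [h, map_zero] at hmap
    have hB : psB A a b = 0 := by
      rcases mul_eq_zero.mp hmap.symm with h' | h'
      · exact absurd h' hdet
      · exact h'
    have hc := congrArg (PowerSeries.coeff (R := ℝ) k) hB
    simp only [psB, Matrix.of_apply, PowerSeries.coeff_mk, map_zero] at hc
    rcases mul_eq_zero.mp hc with h' | h'
    · exact absurd h' (by positivity)
    · exact h'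
  · intro h
    have hB : psB A a b = 0 := by
      ext k
      simp [psB, PowerSeries.coeff_mk, h k]
    have h0 : Polynomial.coeToPowerSeries.ringHom ((pmat A).adjugate a b) = 0 := by
      rw [hmap, hB, mul_zero]
    simpa [coeToPowerSeries.ringHom_apply] using h0

end MatrixAux

section GraphAux

variable {n : ℕ} (G : SimpleGraph (Fin n)) [DecidableRel G.Adj]

/-- principal submatrix of the adjacency matrix -/
def subAdj (I : Finset (Fin n)) : Matrix {x // x ∈ I} {x // x ∈ I} ℝ :=
  (G.adjMatrix ℝ).submatrix (fun a => (a : Fin n)) (fun a => (a : Fin n))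

instance (I : Finset (Fin n)) :
    DecidableRel (G.comap (fun a : {x // x ∈ I} => (a : Fin n))).Adj :=
  fun a b => ‹DecidableRel G.Adj› _ _

lemma comap_adjMatrix (I : Finset (Fin n)) :
    (G.comap (fun a : {x // x ∈ I} => (a : Fin n))).adjMatrix ℝ = subAdj G I := by
  ext a b
  simp [subAdj, SimpleGraph.adjMatrix_apply]

lemma lift_walk {I : Finset (Fin n)} :
    ∀ {u v : Fin n} (p : G.Walk u v) (hu : u ∈ I) (hv : v ∈ I),
      (∀ c ∈ p.support, c ∈ I) →
      Nonempty ((G.comap (fun a : {x // x ∈ I} => (a : Fin n))).Walk ⟨u, hu⟩ ⟨v, hv⟩) := by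
  intro u v p
  induction p with
  | nil => exact fun hu hv _ => ⟨SimpleGraph.Walk.nil⟩
  | @cons u w v h q ih =>
    intro hu hv hs
    have hw : w ∈ I := hs w (by simp)
    obtain ⟨q'⟩ := ih hw hv (fun c hc => hs c (by simp [hc]))
    exact ⟨SimpleGraph.Walk.cons (by simpa using h) q'⟩

lemma forall_pow_eq_zero_iff_gsep (I : Finset (Fin n)) (a b : {x // x ∈ I}) :
    (∀ k, ((subAdj G I) ^ k) a b = 0) ↔ gsep G ↑a ↑b (Finset.univ \ I) := by
  classical
  have key : (∃ k, ((subAdj G I) ^ k) a b ≠ 0)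
      ↔ ∃ p : G.Walk ↑a ↑b, ∀ c ∈ p.support, c ∈ I := by
    constructor
    · rintro ⟨k, hk⟩
      rw [← comap_adjMatrix, SimpleGraph.adjMatrix_pow_apply_eq_card_walk] at hk
      have : Nonempty {p : (G.comap (fun a : {x // x ∈ I} => (a : Fin n))).Walk a b
          | p.length = k} := by
        by_contra hne
        rw [Fintype.card_eq_zero_iff.mpr ⟨fun ⟨p, hp⟩ => hne ⟨⟨p, hp⟩⟩⟩] at hk
        simp at hk
      obtain ⟨⟨q, -⟩⟩ := this
      refine ⟨q.map (SimpleGraph.Hom.comap (fun a : {x // x ∈ I} => (a : Fin n)) G), ?_⟩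
      intro c hc
      have hc' : c ∈ q.support.map (SimpleGraph.Hom.comap (fun a : {x // x ∈ I} => (a : Fin n)) G) := by
        rw [← SimpleGraph.Walk.support_map]; exact hc
      rw [List.mem_map] at hc'
      obtain ⟨x, -, rfl⟩ := hc'
      exact x.2
    · rintro ⟨p, hp⟩
      obtain ⟨q⟩ := lift_walk G p a.2 b.2 hp
      refine ⟨q.length, ?_⟩
      rw [← comap_adjMatrix, SimpleGraph.adjMatrix_pow_apply_eq_card_walk]
      have : 0 < Fintype.card {p : (G.comap (fun a : {x // x ∈ I} => (a : Fin n))).Walk a b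
          | p.length = q.length} := Fintype.card_pos_iff.mpr ⟨⟨q, rfl⟩⟩
      positivity
  rw [← not_iff_not, not_forall]
  push_neg
  rw [key, gsep]
  push_neg
  constructor
  · rintro ⟨p, hp⟩
    refine ⟨p, fun c hcI hc => ?_⟩
    simp only [Finset.mem_sdiff, Finset.mem_univ, true_and] at hcI
    exact hcI (hp c hc)
  · rintro ⟨p, hp⟩
    refine ⟨p, fun c hc => ?_⟩
    by_contra hcI
    exact hp c (by simp [hcI]) hc

/-- auxiliary polynomial: the relevant adjugate entry, as a polynomial in the perturbation. -/
noncomputable def QIpoly (t : Finset (Fin n) × Fin n × Fin n) : ℝ[X] :=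
  if h : t.2.1 ∈ t.1 ∧ t.2.2 ∈ t.1 then
    (pmat (subAdj G t.1)).adjugate ⟨t.2.1, h.1⟩ ⟨t.2.2, h.2⟩ else 1

end GraphAux

/-- For any finite simple graph, all but finitely many `ε ∈ ℝ` are perfect perturbation
factors. -/
theorem almost_every_perturbation_perfect {n : ℕ} (G : SimpleGraph (Fin n))
    [DecidableRel G.Adj] :
    {ε : ℝ | ¬ IsPerfectPerturbation G ε}.Finite := by
  classical
  have hsub : {ε : ℝ | ¬ IsPerfectPerturbation G ε} ⊆
      {ε : ℝ | ((pmat (G.adjMatrix ℝ)).det).IsRoot ε} ∪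
      ⋃ t : Finset (Fin n) × Fin n × Fin n,
        ({ε : ℝ | ((pmat (subAdj G t.1)).det).IsRoot ε}
          ∪ {ε : ℝ | QIpoly G t ≠ 0 ∧ (QIpoly G t).IsRoot ε}) := by
    intro ε hε
    by_contra hgood
    simp only [Set.mem_union, Set.mem_iUnion, not_or, not_exists, Set.mem_setOf_eq,
      not_and] at hgood
    obtain ⟨h1, h2⟩ := hgood
    apply hε
    constructor
    · rw [show (1 : Matrix (Fin n) (Fin n) ℝ) + ε • G.adjMatrix ℝ
          = (pmat (G.adjMatrix ℝ)).map (eval ε) from (pmat_map_eval _ _).symm,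
        ← eval_matrix_det]
      exact isUnit_iff_ne_zero.mpr h1
    · intro I i j hi hj hne
      obtain ⟨hdet, hQ⟩ := h2 (I, i, j)
      set a : {x // x ∈ I} := ⟨i, hi⟩
      set b : {x // x ∈ I} := ⟨j, hj⟩
      have hMsub : ((1 + ε • G.adjMatrix ℝ).submatrix
            (fun a : {x // x ∈ I} => (a : Fin n)) (fun a : {x // x ∈ I} => (a : Fin n)))
          = (pmat (subAdj G I)).map (eval ε) := by
        rw [pmat_map_eval]
        ext c d
        simp [Matrix.submatrix_apply, Matrix.add_apply, Matrix.one_apply, Matrix.smul_apply,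
          subAdj, Subtype.coe_inj]
      rw [hMsub, Matrix.inv_def, Matrix.smul_apply, smul_eq_mul]
      have hdet' : ((pmat (subAdj G I)).map (eval ε)).det ≠ 0 := by
        rw [← eval_matrix_det]; exact hdet
      have hadjentry : ((pmat (subAdj G I)).map (eval ε)).adjugate a b
          = eval ε ((pmat (subAdj G I)).adjugate a b) := by
        rw [← eval_matrix_adjugate]; rfl
      rw [hadjentry]
      have hinv : Ring.inverse (((pmat (subAdj G I)).map (eval ε)).det) ≠ 0 := by
        rw [Ring.inverse_eq_inv]
        exact inv_ne_zero hdet'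
      have hiff : Ring.inverse (((pmat (subAdj G I)).map (eval ε)).det)
            * eval ε ((pmat (subAdj G I)).adjugate a b) = 0
          ↔ eval ε ((pmat (subAdj G I)).adjugate a b) = 0 := by
        constructor
        · intro h
          exact (mul_eq_zero.mp h).resolve_left hinv
        · intro h
          rw [h, mul_zero]
      rw [hiff]
      by_cases hg : gsep G i j (Finset.univ \ I)
      · have hQ0 : (pmat (subAdj G I)).adjugate a b = 0 :=
          (adjugate_pmat_eq_zero_iff _ _ _).mpr ((forall_pow_eq_zero_iff_gsep G I a b).mpr hg)
        simp [hQ0, hg]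
      · have hQne : (pmat (subAdj G I)).adjugate a b ≠ 0 := fun h0 =>
          hg ((forall_pow_eq_zero_iff_gsep G I a b).mp ((adjugate_pmat_eq_zero_iff _ _ _).mp h0))
        have hQt : QIpoly G (I, i, j) = (pmat (subAdj G I)).adjugate a b := by
          rw [QIpoly, dif_pos (⟨hi, hj⟩ : i ∈ I ∧ j ∈ I)]
        have heval : eval ε ((pmat (subAdj G I)).adjugate a b) ≠ 0 := by
          intro h0
          exact (hQ (hQt ▸ hQne)) (by rw [Polynomial.IsRoot, hQt]; exact h0)
        exact iff_of_false heval hg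
  refine Set.Finite.subset (Set.Finite.union ?_ ?_) hsub
  · exact Polynomial.finite_setOf_isRoot (pmat_det_ne_zero _)
  · apply Set.finite_iUnion
    intro t
    apply Set.Finite.union
    · exact Polynomial.finite_setOf_isRoot (pmat_det_ne_zero _)
    · by_cases h : QIpoly G t = 0
      · simp [h]
      · exact (Polynomial.finite_setOf_isRoot h).subset (fun ε hε => hε.2)
end

section
/- (Inner-product-preserving Johnson–Lindenstrauss) Let ε ∈ (0, 1/2) and let V ⊆ ℝ^d be a set of n unit vectors. There exists a linear map g: ℝ^d → ℝ^k with k = ⌈20 log(2n)/ε²⌉ such that for all u, v ∈ V, |⟨g(u), g(v)⟩ − ⟨u, v⟩| ≤ ε. -/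
open Real Finset MeasureTheory

namespace JLproof

noncomputable def sg (b : Bool) : ℝ := if b then 1 else -1

lemma sg_true : sg true = 1 := rfl
lemma sg_false : sg false = -1 := rfl

noncomputable def T {d : ℕ} (a : Fin d → ℝ) (ρ : Fin d → Bool) : ℝ := ∑ i, sg (ρ i) * a i

noncomputable def Q {d k : ℕ} (a : Fin d → ℝ) (ω : Fin k → Fin d → Bool) : ℝ :=
  ∑ j, (T a (ω j))^2

lemma sum_cons {m : ℕ} (F : (Fin (m+1) → Bool) → ℝ) :
    ∑ ρ : Fin (m+1) → Bool, F ρ = ∑ b : Bool, ∑ ρ : Fin m → Bool, F (Fin.cons b ρ) := by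
  rw [← (Fin.consEquiv (fun _ : Fin (m+1) => Bool)).sum_comp F, Fintype.sum_prod_type]
  rfl

lemma T_cons {m : ℕ} (a : Fin (m+1) → ℝ) (b : Bool) (ρ : Fin m → Bool) :
    T a (Fin.cons b ρ) = sg b * a 0 + T (fun i => a i.succ) ρ := by
  simp [T, Fin.sum_univ_succ]

lemma card_bool_fun (m : ℕ) : (Finset.univ : Finset (Fin m → Bool)).card = 2 ^ m := by
  simp [Finset.card_univ]

lemma sum_T_sq {d : ℕ} (a : Fin d → ℝ) :
    ∑ ρ : Fin d → Bool, (T a ρ)^2 = 2^d * ∑ i, a i ^ 2 := by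
  induction d with
  | zero => simp [T]
  | succ m ih =>
    rw [sum_cons (fun ρ => (T a ρ)^2), Fintype.sum_bool, Fin.sum_univ_succ (fun i => a i ^ 2)]
    simp only [T_cons, sg_true, sg_false]
    rw [← Finset.sum_add_distrib]
    have : ∀ ρ : Fin m → Bool,
        (1 * a 0 + T (fun i => a i.succ) ρ)^2 + ((-1) * a 0 + T (fun i => a i.succ) ρ)^2
        = 2 * a 0 ^2 + 2 * (T (fun i => a i.succ) ρ)^2 := by intro ρ; ring
    simp only [this]
    rw [Finset.sum_add_distrib, Finset.sum_const, card_bool_fun, ← Finset.mul_sum, ih]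
    push_cast
    ring

lemma sum_T_four {d : ℕ} (a : Fin d → ℝ) :
    ∑ ρ : Fin d → Bool, (T a ρ)^4 ≤ 3 * 2^d * (∑ i, a i ^ 2)^2 := by
  induction d with
  | zero => simp [T]
  | succ m ih =>
    rw [sum_cons (fun ρ => (T a ρ)^4), Fintype.sum_bool, Fin.sum_univ_succ (fun i => a i ^ 2)]
    simp only [T_cons, sg_true, sg_false]
    rw [← Finset.sum_add_distrib]
    have : ∀ ρ : Fin m → Bool,
        (1 * a 0 + T (fun i => a i.succ) ρ)^4 + ((-1) * a 0 + T (fun i => a i.succ) ρ)^4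
        = 2 * a 0 ^4 + 12 * a 0^2 * (T (fun i => a i.succ) ρ)^2
          + 2 * (T (fun i => a i.succ) ρ)^4 := by intro ρ; ring
    simp only [this]
    rw [Finset.sum_add_distrib, Finset.sum_add_distrib, Finset.sum_const, card_bool_fun,
      ← Finset.mul_sum, ← Finset.mul_sum, sum_T_sq]
    have h4 := ih (fun i => a i.succ)
    have hA : (0:ℝ) ≤ ∑ i, a (Fin.succ i) ^ 2 := by positivity
    have ha0 : (0:ℝ) ≤ a 0 ^ 2 := by positivity
    simp only [nsmul_eq_mul]
    push_cast
    have hps : (2:ℝ)^(m+1) = 2^m * 2 := pow_succ 2 m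
    have hp : (0:ℝ) < 2^m := by positivity
    nlinarith [h4, hp, hps, mul_nonneg hp.le (sq_nonneg (a 0 ^ 2)),
      mul_nonneg hp.le (mul_nonneg ha0 hA)]

lemma sum_exp_T {d : ℕ} (a : Fin d → ℝ) (c : ℝ) :
    ∑ ρ : Fin d → Bool, exp (c * T a ρ) ≤ 2^d * exp (c^2 * (∑ i, a i ^ 2) / 2) := by
  induction d with
  | zero => simp [T]
  | succ m ih =>
    rw [sum_cons (fun ρ => exp (c * T a ρ)), Fintype.sum_bool,
      Fin.sum_univ_succ (fun i => a i ^ 2)]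
    simp only [T_cons, sg_true, sg_false]
    rw [← Finset.sum_add_distrib]
    have key : ∀ ρ : Fin m → Bool,
        exp (c * (1 * a 0 + T (fun i => a i.succ) ρ))
          + exp (c * ((-1) * a 0 + T (fun i => a i.succ) ρ))
        = 2 * Real.cosh (c * a 0) * exp (c * T (fun i => a i.succ) ρ) := by
      intro ρ
      rw [Real.cosh_eq]
      rw [mul_add, mul_add, exp_add, exp_add]
      ring_nf
    simp only [key]
    rw [← Finset.mul_sum]
    have h1 : 2 * Real.cosh (c * a 0) ≤ 2 * exp ((c * a 0)^2 / 2) := by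
      have := Real.cosh_le_exp_half_sq (c * a 0)
      linarith
    have h2 : (0:ℝ) ≤ ∑ ρ : Fin m → Bool, exp (c * T (fun i => a i.succ) ρ) := by positivity
    calc 2 * Real.cosh (c * a 0) * ∑ ρ : Fin m → Bool, exp (c * T (fun i => a i.succ) ρ)
        ≤ 2 * exp ((c * a 0)^2 / 2) * (2^m * exp (c^2 * (∑ i, a (Fin.succ i) ^ 2) / 2)) := by
          apply mul_le_mul h1 (ih (fun i => a i.succ)) h2 (by positivity)
      _ = (2 * 2^m) * (exp ((c * a 0)^2 / 2) * exp (c^2 * (∑ i, a (Fin.succ i) ^ 2) / 2)) := by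
          ring
      _ = 2^(m+1) * exp (c^2 * (a 0 ^ 2 + ∑ i, a (Fin.succ i) ^ 2) / 2) := by
          rw [← Real.exp_add]
          congr 1
          · ring
          · congr 1; ring

lemma integrable_exp_quad (b c : ℝ) (hb : 0 < b) :
    Integrable (fun x : ℝ => exp (-b * x^2 + c * x)) := by
  have h : ∀ x : ℝ, -b * x^2 + c * x = -(b * (x - c/(2*b))^2) + c^2/(4*b) := by
    intro x; field_simp; ring
  simp only [h, Real.exp_add]
  apply Integrable.mul_const
  have := (integrable_exp_neg_mul_sq hb).comp_sub_right (c/(2*b))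
  simpa [neg_mul] using this

lemma integral_exp_quad (b c : ℝ) (hb : 0 < b) :
    ∫ x : ℝ, exp (-b * x^2 + c * x) = Real.sqrt (π / b) * exp (c^2 / (4*b)) := by
  have h : ∀ x : ℝ, -b * x^2 + c * x = -(b * (x - c/(2*b))^2) + c^2/(4*b) := by
    intro x; field_simp; ring
  simp only [h, Real.exp_add]
  rw [MeasureTheory.integral_mul_const]
  congr 1
  have := MeasureTheory.integral_sub_right_eq_self
    (fun y : ℝ => exp (-(b * y^2))) (c/(2*b)) (μ := volume)
  rw [this]
  simpa [neg_mul] using integral_gaussian b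

lemma exp_sq_eq (s t : ℝ) (hs : 0 < s) :
    exp (s * t^2) = Real.sqrt (s / π) * ∫ x : ℝ, exp (-s * x^2 + (2*s*t) * x) := by
  rw [integral_exp_quad s (2*s*t) hs]
  rw [← mul_assoc, ← Real.sqrt_mul (by positivity : (0:ℝ) ≤ s/π)]
  have h1 : s / π * (π / s) = 1 := by
    field_simp
  rw [h1, Real.sqrt_one, one_mul]
  congr 1
  field_simp
  ring

lemma sum_exp_T_sq {d : ℕ} (a : Fin d → ℝ) {s : ℝ} (hs : 0 < s)
    (hsA : 2 * s * (∑ i, a i ^ 2) < 1) :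
    ∑ ρ : Fin d → Bool, exp (s * (T a ρ)^2)
      ≤ 2^d / Real.sqrt (1 - 2 * s * (∑ i, a i ^ 2)) := by
  set A := ∑ i, a i ^ 2 with hA
  have hA0 : 0 ≤ A := by positivity
  have h1 : ∀ ρ, exp (s * (T a ρ)^2)
      = Real.sqrt (s / π) * ∫ x : ℝ, exp (-s * x^2 + (2*s*(T a ρ)) * x) :=
    fun ρ => exp_sq_eq s (T a ρ) hs
  simp only [h1]
  rw [← Finset.mul_sum]
  rw [← MeasureTheory.integral_finset_sum _ (fun ρ _ => integrable_exp_quad s _ hs)]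
  have key : ∀ x : ℝ, ∑ ρ : Fin d → Bool, exp (-s * x^2 + (2*s*(T a ρ)) * x)
      ≤ 2^d * exp (-(s * (1 - 2*s*A)) * x^2) := by
    intro x
    have e1 : ∀ ρ : Fin d → Bool, exp (-s * x^2 + (2*s*(T a ρ)) * x)
        = exp (-s * x^2) * exp ((2*s*x) * T a ρ) := by
      intro ρ; rw [← Real.exp_add]; ring_nf
    simp only [e1]
    rw [← Finset.mul_sum]
    have h2 := sum_exp_T a (2*s*x)
    have h3 : exp (-s*x^2) * (2^d * exp ((2*s*x)^2 * A / 2))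
        = 2^d * exp (-(s * (1 - 2*s*A)) * x^2) := by
      rw [mul_left_comm, ← Real.exp_add]
      congr 2
      ring
    calc exp (-s*x^2) * ∑ ρ : Fin d → Bool, exp ((2*s*x) * T a ρ)
        ≤ exp (-s*x^2) * (2^d * exp ((2*s*x)^2 * A / 2)) := by
          apply mul_le_mul_of_nonneg_left h2 (Real.exp_pos _).le
      _ = 2^d * exp (-(s * (1 - 2*s*A)) * x^2) := h3
  have hpos : 0 < s * (1 - 2*s*A) := by nlinarith
  have hint1 : Integrable (fun x : ℝ => ∑ ρ : Fin d → Bool,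
      exp (-s * x^2 + (2*s*(T a ρ)) * x)) :=
    MeasureTheory.integrable_finset_sum _ (fun ρ _ => integrable_exp_quad s _ hs)
  have hint2 : Integrable (fun x : ℝ => 2^d * exp (-(s * (1 - 2*s*A)) * x^2)) :=
    (integrable_exp_neg_mul_sq hpos).const_mul _
  have h4 : (∫ x : ℝ, ∑ ρ : Fin d → Bool, exp (-s * x^2 + (2*s*(T a ρ)) * x))
      ≤ ∫ x : ℝ, 2^d * exp (-(s * (1 - 2*s*A)) * x^2) :=
    MeasureTheory.integral_mono hint1 hint2 key
  have h5 : (∫ x : ℝ, 2^d * exp (-(s * (1 - 2*s*A)) * x^2))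
      = 2^d * Real.sqrt (π / (s * (1 - 2*s*A))) := by
    rw [MeasureTheory.integral_const_mul, integral_gaussian]
  have hsqrt : Real.sqrt (s / π) * Real.sqrt (π / (s * (1 - 2*s*A)))
      = 1 / Real.sqrt (1 - 2*s*A) := by
    rw [← Real.sqrt_mul (by positivity : (0:ℝ) ≤ s/π)]
    have : s / π * (π / (s * (1 - 2*s*A))) = 1 / (1 - 2*s*A) := by
      have hπ : (0:ℝ) < π := Real.pi_pos
      have h1' : (1:ℝ) - 2*s*A ≠ 0 := by linarith
      field_simp
    rw [this, Real.sqrt_div' 1 (by linarith), Real.sqrt_one]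
  calc Real.sqrt (s / π) * ∫ x : ℝ, ∑ ρ : Fin d → Bool, exp (-s * x^2 + (2*s*(T a ρ)) * x)
      ≤ Real.sqrt (s / π) * (2^d * Real.sqrt (π / (s * (1 - 2*s*A)))) := by
        apply mul_le_mul_of_nonneg_left _ (Real.sqrt_nonneg _)
        rw [← h5]; exact h4
    _ = 2^d * (Real.sqrt (s / π) * Real.sqrt (π / (s * (1 - 2*s*A)))) := by ring
    _ = 2^d / Real.sqrt (1 - 2*s*A) := by rw [hsqrt]; ring

lemma sum_prod_rows {d k : ℕ} (f : (Fin d → Bool) → ℝ) :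
    ∑ ω : Fin k → Fin d → Bool, ∏ j, f (ω j) = (∑ ρ : Fin d → Bool, f ρ)^k := by
  have := Finset.prod_univ_sum (fun _ : Fin k => (Finset.univ : Finset (Fin d → Bool)))
    (fun _ ρ => f ρ)
  rw [Fintype.piFinset_univ] at this
  rw [← this, Finset.prod_const, Finset.card_univ, Fintype.card_fin]

lemma sum_exp_Q {d k : ℕ} (a : Fin d → ℝ) (s : ℝ) :
    ∑ ω : Fin k → Fin d → Bool, exp (s * Q a ω)
      = (∑ ρ : Fin d → Bool, exp (s * (T a ρ)^2))^k := by
  rw [← sum_prod_rows]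
  congr 1; funext ω
  rw [Q, Finset.mul_sum, Real.exp_sum]

lemma count_le_mgf {d k : ℕ} (a : Fin d → ℝ) (s c : ℝ) (P : (Fin k → Fin d → Bool) → Prop)
    [DecidablePred P] (h : ∀ ω, P ω → c ≤ s * Q a ω) :
    ((Finset.univ.filter P).card : ℝ) * exp c
      ≤ (∑ ρ : Fin d → Bool, exp (s * (T a ρ)^2))^k := by
  rw [← sum_exp_Q]
  calc ((Finset.univ.filter P).card : ℝ) * exp c
      = ∑ _ω ∈ Finset.univ.filter P, exp c := by rw [Finset.sum_const, nsmul_eq_mul]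
    _ ≤ ∑ ω ∈ Finset.univ.filter P, exp (s * Q a ω) := by
        apply Finset.sum_le_sum
        intro ω hω
        exact Real.exp_le_exp.2 (h ω (Finset.mem_filter.1 hω).2)
    _ ≤ ∑ ω : Fin k → Fin d → Bool, exp (s * Q a ω) := by
        apply Finset.sum_le_sum_of_subset_of_nonneg (Finset.filter_subset _ _)
        intro ω _ _; exact (Real.exp_pos _).le

lemma exp_neg_le_quad {u : ℝ} (hu : 0 ≤ u) : exp (-u) ≤ 1 - u + u^2/2 := by
  have h3 := Real.quadratic_le_exp_of_nonneg hu
  have hexp : exp (-u) * exp u = 1 := by rw [← Real.exp_add]; simp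
  have hp := Real.exp_pos (-u)
  nlinarith [sq_nonneg u, sq_nonneg (u^2), mul_pos hp (Real.exp_pos u)]

lemma si_poly {ε : ℝ} (h0 : 0 < ε) (h2 : ε ≤ 1/2) :
    1 ≤ (1 - ε/2) * (1 + (ε/2 + ε^2/4) + (ε/2 + ε^2/4)^2/2) := by
  nlinarith [sq_nonneg ε, pow_pos h0 3, pow_pos h0 4, pow_pos h0 5]

lemma exp_neg_t_le {ε : ℝ} (h0 : 0 < ε) (h2 : ε ≤ 1/2) :
    exp (-(ε/2 + ε^2/4)) ≤ 1 - ε/2 := by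
  set t := ε/2 + ε^2/4 with ht
  have htpos : 0 ≤ t := by positivity
  have h3 := Real.quadratic_le_exp_of_nonneg htpos
  have hexp : exp (-t) * exp t = 1 := by rw [← Real.exp_add]; simp
  have hp := Real.exp_pos (-t)
  have hpoly := si_poly h0 h2
  nlinarith [mul_le_mul_of_nonneg_left h3 hp.le]

lemma SI1 {ε : ℝ} (h0 : 0 < ε) (h2 : ε ≤ 1/2) :
    exp (-(ε*(1+ε)/4)) / Real.sqrt (1 - ε/2) ≤ exp (-(ε^2/8)) := by
  have hb : (0:ℝ) < 1 - ε/2 := by linarith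
  have hsq : (0:ℝ) < Real.sqrt (1 - ε/2) := Real.sqrt_pos.2 hb
  rw [div_le_iff₀ hsq]
  have hX : exp (-(ε*(1+ε)/4) + ε^2/8) ≤ Real.sqrt (1 - ε/2) := by
    have h4 : (exp (-(ε*(1+ε)/4) + ε^2/8))^2 ≤ 1 - ε/2 := by
      rw [sq, ← Real.exp_add]
      have : (-(ε*(1+ε)/4) + ε^2/8) + (-(ε*(1+ε)/4) + ε^2/8) = -(ε/2 + ε^2/4) := by ring
      rw [this]
      exact exp_neg_t_le h0 h2
    calc exp (-(ε*(1+ε)/4) + ε^2/8) = Real.sqrt ((exp (-(ε*(1+ε)/4) + ε^2/8))^2) := by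
          rw [Real.sqrt_sq (Real.exp_pos _).le]
      _ ≤ Real.sqrt (1 - ε/2) := Real.sqrt_le_sqrt h4
  calc exp (-(ε*(1+ε)/4)) = exp (-(ε^2/8)) * exp (-(ε*(1+ε)/4) + ε^2/8) := by
        rw [← Real.exp_add]; congr 1; ring
    _ ≤ exp (-(ε^2/8)) * Real.sqrt (1 - ε/2) := by
        exact mul_le_mul_of_nonneg_left hX (Real.exp_pos _).le

lemma row_lower {d : ℕ} (a : Fin d → ℝ) {s : ℝ} (hs : 0 < s) :
    ∑ ρ : Fin d → Bool, exp (-s * (T a ρ)^2)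
      ≤ 2^d * exp (-(s * (∑ i, a i ^ 2)) + 3*(s * (∑ i, a i ^ 2))^2/2) := by
  set A := ∑ i, a i ^ 2 with hA
  have step1 : ∑ ρ : Fin d → Bool, exp (-s * (T a ρ)^2)
      ≤ ∑ ρ : Fin d → Bool, (1 - s * (T a ρ)^2 + (s * (T a ρ)^2)^2/2) := by
    apply Finset.sum_le_sum
    intro ρ _
    have hu : 0 ≤ s * (T a ρ)^2 := by positivity
    have := exp_neg_le_quad hu
    rw [show -s * (T a ρ)^2 = -(s * (T a ρ)^2) by ring]
    exact this
  have card2 : ((Finset.univ : Finset (Fin d → Bool)).card : ℝ) = 2^d := by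
    simp [Finset.card_univ]
  have step2 : ∑ ρ : Fin d → Bool, (1 - s * (T a ρ)^2 + (s * (T a ρ)^2)^2/2)
      ≤ 2^d * (1 - s * A + 3 * (s*A)^2 / 2) := by
    have e1 : ∀ ρ : Fin d → Bool, (1 - s * (T a ρ)^2 + (s * (T a ρ)^2)^2/2)
        = 1 - s * (T a ρ)^2 + s^2/2 * (T a ρ)^4 := by intro ρ; ring
    simp only [e1]
    rw [Finset.sum_add_distrib, Finset.sum_sub_distrib, Finset.sum_const, ← Finset.mul_sum,
      ← Finset.mul_sum, sum_T_sq, nsmul_eq_mul, card2]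
    have h4 := sum_T_four a
    have hs2 : (0:ℝ) < s^2/2 := by positivity
    nlinarith [mul_le_mul_of_nonneg_left h4 hs2.le]
  have step3 : (2:ℝ)^d * (1 - s * A + 3 * (s*A)^2 / 2)
      ≤ 2^d * exp (-(s * A) + 3*(s * A)^2/2) := by
    have := Real.add_one_le_exp (-(s * A) + 3*(s * A)^2/2)
    have h2d : (0:ℝ) ≤ 2^d := by positivity
    nlinarith
  linarith

set_option maxHeartbeats 2000000 in
open scoped Classical in
lemma badcount {d k : ℕ} (a : Fin d → ℝ) {ε : ℝ} (h0 : 0 < ε) (h2 : ε ≤ 1/2) :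
    (((Finset.univ : Finset (Fin k → Fin d → Bool)).filter fun ω =>
        ¬ |Q a ω - k * (∑ i, a i ^ 2)| ≤ ε * (k * (∑ i, a i ^ 2))).card : ℝ)
      ≤ 2 * ((2:ℝ)^d)^k * exp (-(k * ε^2) / 8) := by
  set A := ∑ i, a i ^ 2 with hA
  have hA0 : 0 ≤ A := by positivity
  rcases eq_or_lt_of_le hA0 with hAz | hApos
  · have hz : ∀ i, a i = 0 := by
      intro i
      have := Finset.sum_eq_zero_iff_of_nonneg
        (fun j _ => (sq_nonneg (a j))) |>.1 hAz.symm i (Finset.mem_univ i)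
      exact pow_eq_zero_iff (n := 2) (by norm_num) |>.1 this
    have hT : ∀ ρ, T a ρ = 0 := by
      intro ρ; rw [T]; apply Finset.sum_eq_zero; intro i _; rw [hz i]; ring
    have hQ : ∀ ω : Fin k → Fin d → Bool, Q a ω = 0 := by
      intro ω; rw [Q]; apply Finset.sum_eq_zero; intro j _; rw [hT]; ring
    have : (Finset.univ.filter fun ω : Fin k → Fin d → Bool =>
        ¬ |Q a ω - k * A| ≤ ε * (k * A)) = ∅ := by
      apply Finset.filter_eq_empty_iff.2
      intro ω _
      rw [not_not, hQ, ← hAz]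
      simp
    rw [this]
    simp
    positivity
  · have hAne : A ≠ 0 := ne_of_gt hApos
    set su := ε / (4*A) with hsu
    have hsu0 : 0 < su := by positivity
    have hsuA : su * A = ε/4 := by rw [hsu, div_mul_eq_mul_div, mul_div_mul_right _ _ hAne]
    have h2suA : 2 * su * A < 1 := by
      rw [mul_assoc, hsuA]; linarith
    have hrowU : ∑ ρ : Fin d → Bool, exp (su * (T a ρ)^2)
        ≤ 2^d / Real.sqrt (1 - ε/2) := by
      have := sum_exp_T_sq a hsu0 h2suA
      rw [mul_assoc, hsuA] at this
      convert this using 3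
      ring
    have hcU := count_le_mgf (k := k) a su (su * ((1+ε) * (k*A)))
      (fun ω => (1+ε) * (k*A) ≤ Q a ω)
      (fun ω hω => mul_le_mul_of_nonneg_left hω hsu0.le)
    have hbU : ((Finset.univ.filter fun ω : Fin k → Fin d → Bool =>
        (1+ε) * (k*A) ≤ Q a ω).card : ℝ) ≤ ((2:ℝ)^d)^k * exp (-(k*ε^2)/8) := by
      have hpow : (∑ ρ : Fin d → Bool, exp (su * (T a ρ)^2))^k
          ≤ (2^d / Real.sqrt (1 - ε/2))^k := by
        apply pow_le_pow_left₀ (by positivity) hrowU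
      have hc : su * ((1+ε) * (k*A)) = k * (ε*(1+ε)/4) := by
        rw [show su * ((1+ε) * (k*A)) = (su * A) * ((1+ε) * k) by ring, hsuA]; ring
      have key : ((Finset.univ.filter fun ω : Fin k → Fin d → Bool =>
          (1+ε) * (k*A) ≤ Q a ω).card : ℝ) * exp (k * (ε*(1+ε)/4))
          ≤ (2^d / Real.sqrt (1 - ε/2))^k := by
        rw [← hc]; exact le_trans hcU hpow
      have hsplit : ((2:ℝ)^d / Real.sqrt (1 - ε/2))^k * exp (-(k * (ε*(1+ε)/4)))
          ≤ ((2:ℝ)^d)^k * exp (-(k*ε^2)/8) := by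
        have hexpk : exp (-(k * (ε*(1+ε)/4))) = (exp (-(ε*(1+ε)/4)))^k := by
          rw [← Real.exp_nat_mul]; congr 1; ring
        have hexpk2 : exp (-(k*ε^2)/8) = (exp (-(ε^2/8)))^k := by
          rw [← Real.exp_nat_mul]; congr 1; ring
        rw [hexpk, hexpk2, ← mul_pow, ← mul_pow]
        apply pow_le_pow_left₀ (by positivity)
        have hsi := SI1 h0 h2
        have hsq : (0:ℝ) < Real.sqrt (1 - ε/2) := Real.sqrt_pos.2 (by linarith)
        calc (2:ℝ)^d / Real.sqrt (1 - ε/2) * exp (-(ε*(1+ε)/4))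
            = (2:ℝ)^d * (exp (-(ε*(1+ε)/4)) / Real.sqrt (1 - ε/2)) := by ring
          _ ≤ (2:ℝ)^d * exp (-(ε^2/8)) := by
              apply mul_le_mul_of_nonneg_left hsi (by positivity)
      calc ((Finset.univ.filter fun ω : Fin k → Fin d → Bool =>
            (1+ε) * (k*A) ≤ Q a ω).card : ℝ)
          = ((Finset.univ.filter fun ω : Fin k → Fin d → Bool =>
            (1+ε) * (k*A) ≤ Q a ω).card : ℝ) * exp (k * (ε*(1+ε)/4))
              * exp (-(k * (ε*(1+ε)/4))) := by
            rw [mul_assoc, ← Real.exp_add]; simp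
        _ ≤ (2^d / Real.sqrt (1 - ε/2))^k * exp (-(k * (ε*(1+ε)/4))) := by
            apply mul_le_mul_of_nonneg_right key (Real.exp_pos _).le
        _ ≤ ((2:ℝ)^d)^k * exp (-(k*ε^2)/8) := hsplit
    set sl := ε / (3*A) with hsl
    have hsl0 : 0 < sl := by positivity
    have hslA : sl * A = ε/3 := by rw [hsl, div_mul_eq_mul_div, mul_div_mul_right _ _ hAne]
    have hrowL : ∑ ρ : Fin d → Bool, exp ((-sl) * (T a ρ)^2)
        ≤ 2^d * exp (-(ε/3) + ε^2/6) := by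
      have := row_lower a hsl0
      rw [hslA] at this
      calc ∑ ρ : Fin d → Bool, exp ((-sl) * (T a ρ)^2)
          = ∑ ρ : Fin d → Bool, exp (-sl * (T a ρ)^2) := by simp
        _ ≤ 2^d * exp (-(ε/3) + 3*(ε/3)^2/2) := this
        _ = 2^d * exp (-(ε/3) + ε^2/6) := by congr 2; ring
    have hcL := count_le_mgf (k := k) a (-sl) (-(sl * ((1-ε) * (k*A))))
      (fun ω => Q a ω ≤ (1-ε) * (k*A))
      (fun ω hω => by
        have := mul_le_mul_of_nonneg_left hω hsl0.le
        nlinarith)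
    have hbL : ((Finset.univ.filter fun ω : Fin k → Fin d → Bool =>
        Q a ω ≤ (1-ε) * (k*A)).card : ℝ) ≤ ((2:ℝ)^d)^k * exp (-(k*ε^2)/8) := by
      have hpow : (∑ ρ : Fin d → Bool, exp ((-sl) * (T a ρ)^2))^k
          ≤ (2^d * exp (-(ε/3) + ε^2/6))^k :=
        pow_le_pow_left₀ (by positivity) hrowL k
      have hc : sl * ((1-ε) * (k*A)) = k * (ε*(1-ε)/3) := by
        rw [show sl * ((1-ε) * (k*A)) = (sl * A) * ((1-ε) * k) by ring, hslA]; ring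
      have key : ((Finset.univ.filter fun ω : Fin k → Fin d → Bool =>
          Q a ω ≤ (1-ε) * (k*A)).card : ℝ) * exp (-(k * (ε*(1-ε)/3)))
          ≤ (2^d * exp (-(ε/3) + ε^2/6))^k := by
        rw [show -(k * (ε*(1-ε)/3)) = -(sl * ((1-ε)*(k*A))) by rw [hc]]
        exact le_trans hcL hpow
      have hfin : ((2:ℝ)^d * exp (-(ε/3) + ε^2/6))^k * exp (k * (ε*(1-ε)/3))
          ≤ ((2:ℝ)^d)^k * exp (-(k*ε^2)/8) := by
        have e1 : exp (k * (ε*(1-ε)/3)) = (exp (ε*(1-ε)/3))^k := by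
          rw [← Real.exp_nat_mul]
        have e2 : exp (-(k*ε^2)/8) = (exp (-(ε^2/8)))^k := by
          rw [← Real.exp_nat_mul]; congr 1; ring
        rw [e1, e2, ← mul_pow, ← mul_pow]
        apply pow_le_pow_left₀ (by positivity)
        rw [mul_assoc, ← Real.exp_add]
        apply mul_le_mul_of_nonneg_left _ (by positivity : (0:ℝ) ≤ 2^d)
        apply Real.exp_le_exp.2
        nlinarith [sq_nonneg ε, h0.le]
      calc ((Finset.univ.filter fun ω : Fin k → Fin d → Bool =>
            Q a ω ≤ (1-ε) * (k*A)).card : ℝ)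
          = ((Finset.univ.filter fun ω : Fin k → Fin d → Bool =>
            Q a ω ≤ (1-ε) * (k*A)).card : ℝ) * exp (-(k * (ε*(1-ε)/3)))
              * exp (k * (ε*(1-ε)/3)) := by
            rw [mul_assoc, ← Real.exp_add]; simp
        _ ≤ (2^d * exp (-(ε/3) + ε^2/6))^k * exp (k * (ε*(1-ε)/3)) := by
            apply mul_le_mul_of_nonneg_right key (Real.exp_pos _).le
        _ ≤ ((2:ℝ)^d)^k * exp (-(k*ε^2)/8) := hfin
    have hsub : (Finset.univ.filter fun ω : Fin k → Fin d → Bool =>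
        ¬ |Q a ω - k * A| ≤ ε * (k * A))
        ⊆ (Finset.univ.filter fun ω : Fin k → Fin d → Bool =>
            (1+ε) * (k*A) ≤ Q a ω)
          ∪ (Finset.univ.filter fun ω : Fin k → Fin d → Bool =>
            Q a ω ≤ (1-ε) * (k*A)) := by
      intro ω hω
      rw [Finset.mem_filter] at hω
      rw [Finset.mem_union, Finset.mem_filter, Finset.mem_filter]
      rcases abs_cases (Q a ω - k * A) with ⟨he, _⟩ | ⟨he, _⟩
      · left; refine ⟨Finset.mem_univ _, ?_⟩
        have := hω.2
        rw [not_le, he] at this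
        nlinarith
      · right; refine ⟨Finset.mem_univ _, ?_⟩
        have := hω.2
        rw [not_le, he] at this
        nlinarith
    calc (((Finset.univ : Finset (Fin k → Fin d → Bool)).filter fun ω =>
          ¬ |Q a ω - k * A| ≤ ε * (k * A)).card : ℝ)
        ≤ (((Finset.univ.filter fun ω : Fin k → Fin d → Bool =>
            (1+ε) * (k*A) ≤ Q a ω)
          ∪ (Finset.univ.filter fun ω : Fin k → Fin d → Bool =>
            Q a ω ≤ (1-ε) * (k*A))).card : ℝ) := by
          exact_mod_cast Finset.card_le_card hsub
      _ ≤ (((Finset.univ.filter fun ω : Fin k → Fin d → Bool =>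
            (1+ε) * (k*A) ≤ Q a ω).card : ℝ)
          + ((Finset.univ.filter fun ω : Fin k → Fin d → Bool =>
            Q a ω ≤ (1-ε) * (k*A)).card : ℝ)) := by
          exact_mod_cast Finset.card_union_le _ _
      _ ≤ 2 * ((2:ℝ)^d)^k * exp (-(k * ε^2) / 8) := by linarith

open scoped Classical in
lemma exists_good {d k : ℕ} {ε : ℝ} (h0 : 0 < ε) (h2 : ε ≤ 1/2)
    (W : Finset (EuclideanSpace ℝ (Fin d)))
    (hWcard : (W.card : ℝ) * (2 * exp (-(k * ε^2) / 8)) < 1) :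
    ∃ ω : Fin k → Fin d → Bool, ∀ w ∈ W,
      |Q w ω - k * (∑ i, w i ^ 2)| ≤ ε * (k * (∑ i, w i ^ 2)) := by
  by_contra hcon
  push_neg at hcon
  have hsub : (Finset.univ : Finset (Fin k → Fin d → Bool))
      ⊆ W.biUnion (fun w => Finset.univ.filter fun ω =>
          ¬ |Q w ω - k * (∑ i, w i ^ 2)| ≤ ε * (k * (∑ i, w i ^ 2))) := by
    intro ω _
    obtain ⟨w, hwW, hw⟩ := hcon ω
    exact Finset.mem_biUnion.2 ⟨w, hwW, Finset.mem_filter.2 ⟨Finset.mem_univ _, not_le.2 hw⟩⟩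
  have hcard1 : (((Finset.univ : Finset (Fin k → Fin d → Bool))).card : ℝ)
      ≤ ∑ w ∈ W, (((Finset.univ : Finset (Fin k → Fin d → Bool)).filter fun ω =>
          ¬ |Q w ω - k * (∑ i, w i ^ 2)| ≤ ε * (k * (∑ i, w i ^ 2))).card : ℝ) := by
    have h1 := Finset.card_le_card hsub
    have h2 := Finset.card_biUnion_le (s := W)
      (t := fun w => (Finset.univ : Finset (Fin k → Fin d → Bool)).filter fun ω =>
          ¬ |Q w ω - k * (∑ i, w i ^ 2)| ≤ ε * (k * (∑ i, w i ^ 2)))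
    exact_mod_cast le_trans h1 h2
  have hcard2 : ∑ w ∈ W, (((Finset.univ : Finset (Fin k → Fin d → Bool)).filter fun ω =>
          ¬ |Q w ω - k * (∑ i, w i ^ 2)| ≤ ε * (k * (∑ i, w i ^ 2))).card : ℝ)
      ≤ (W.card : ℝ) * (2 * ((2:ℝ)^d)^k * exp (-(k * ε^2) / 8)) := by
    calc ∑ w ∈ W, (((Finset.univ : Finset (Fin k → Fin d → Bool)).filter fun ω =>
          ¬ |Q w ω - k * (∑ i, w i ^ 2)| ≤ ε * (k * (∑ i, w i ^ 2))).card : ℝ)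
        ≤ ∑ _w ∈ W, 2 * ((2:ℝ)^d)^k * exp (-(k * ε^2) / 8) :=
          Finset.sum_le_sum (fun w _ => badcount w h0 h2)
      _ = (W.card : ℝ) * (2 * ((2:ℝ)^d)^k * exp (-(k * ε^2) / 8)) := by
          rw [Finset.sum_const, nsmul_eq_mul]
  have hcardU : (((Finset.univ : Finset (Fin k → Fin d → Bool))).card : ℝ)
      = ((2:ℝ)^d)^k := by
    rw [Finset.card_univ]
    rw [show Fintype.card (Fin k → Fin d → Bool)
      = Fintype.card (Fin d → Bool) ^ k by simp [Fintype.card_fun]]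
    push_cast
    rw [show Fintype.card (Fin d → Bool) = 2^d by simp [Fintype.card_fun]]
    push_cast
    ring
  have hpos : (0:ℝ) < ((2:ℝ)^d)^k := by positivity
  have : ((2:ℝ)^d)^k ≤ (W.card : ℝ) * (2 * ((2:ℝ)^d)^k * exp (-(k * ε^2) / 8)) := by
    have h3 := le_trans hcard1 hcard2
    rwa [hcardU] at h3
  have contra : ((2:ℝ)^d)^k < ((2:ℝ)^d)^k := by
    calc ((2:ℝ)^d)^k ≤ (W.card : ℝ) * (2 * ((2:ℝ)^d)^k * exp (-(k * ε^2) / 8)) := this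
      _ = ((W.card : ℝ) * (2 * exp (-(k * ε^2) / 8))) * ((2:ℝ)^d)^k := by ring
      _ < 1 * ((2:ℝ)^d)^k := by
          apply mul_lt_mul_of_pos_right hWcard hpos
      _ = ((2:ℝ)^d)^k := by ring
  exact lt_irrefl _ contra

end JLproof

open JLproof Real in
/-- Inner-product-preserving Johnson–Lindenstrauss: for `ε ∈ (0, 1/2)` and a set `V` of `n`
unit vectors in `ℝ^d`, there is a linear map into `ℝ^k` with `k = ⌈20 log(2n)/ε²⌉` preserving
all pairwise inner products of `V` up to `ε`. -/
theorem inner_product_JL {d n : ℕ} (ε : ℝ) (hε : ε ∈ Set.Ioo (0 : ℝ) (1/2))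
    (V : Finset (EuclideanSpace ℝ (Fin d))) (hcard : V.card = n)
    (hunit : ∀ v ∈ V, ‖v‖ = 1) :
    ∃ g : EuclideanSpace ℝ (Fin d) →ₗ[ℝ]
        EuclideanSpace ℝ (Fin ⌈20 * Real.log (2 * n) / ε ^ 2⌉₊),
      ∀ u ∈ V, ∀ v ∈ V, |(inner ℝ (g u) (g v) : ℝ) - (inner ℝ u v : ℝ)| ≤ ε := by
  obtain ⟨hε0, hε2'⟩ := hε
  have hε2 : ε ≤ 1/2 := le_of_lt hε2'
  rcases V.eq_empty_or_nonempty with hV | hV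
  · refine ⟨0, ?_⟩
    intro u hu
    rw [hV] at hu
    exact absurd hu (Finset.notMem_empty u)
  have hn1 : 1 ≤ n := by rw [← hcard]; exact Finset.card_pos.2 hV
  have hnR : (1:ℝ) ≤ (n:ℝ) := by exact_mod_cast hn1
  set K := ⌈20 * Real.log (2 * n) / ε ^ 2⌉₊ with hK
  classical
  set W : Finset (EuclideanSpace ℝ (Fin d)) :=
    ((V ×ˢ V).image fun p => p.1 + p.2) ∪ ((V ×ˢ V).image fun p => p.1 - p.2) with hWdef
  have hWc : (W.card : ℝ) ≤ 2 * (n:ℝ)^2 := by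
    have h1 : W.card ≤ n^2 + n^2 := by
      calc W.card ≤ ((V ×ˢ V).image fun p : _ × _ => p.1 + p.2).card
            + ((V ×ˢ V).image fun p : _ × _ => p.1 - p.2).card := Finset.card_union_le _ _
        _ ≤ n^2 + n^2 := by
            apply add_le_add <;>
            · calc _ ≤ (V ×ˢ V).card := Finset.card_image_le
                _ = n^2 := by rw [Finset.card_product, hcard]; ring
    calc (W.card:ℝ) ≤ ((n^2+n^2 : ℕ) : ℝ) := by exact_mod_cast h1
      _ = 2*(n:ℝ)^2 := by push_cast; ring
  have h2n : (0:ℝ) < 2 * n := by linarith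
  have hL : 0 < Real.log (2*(n:ℝ)) := Real.log_pos (by linarith)
  have hKe : 20 * Real.log (2*(n:ℝ)) ≤ (K:ℝ) * ε^2 := by
    have h1 : 20 * Real.log (2*(n:ℝ)) / ε^2 ≤ (K:ℝ) := Nat.le_ceil _
    rw [div_le_iff₀ (by positivity)] at h1
    linarith
  have hsmall : (W.card : ℝ) * (2 * exp (-((K:ℝ) * ε^2)/8)) < 1 := by
    have e1 : exp (-((K:ℝ)*ε^2)/8) ≤ exp (-(20 * Real.log (2*(n:ℝ)))/8) := by
      apply Real.exp_le_exp.2; linarith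
    have hexplog : exp (Real.log (2*(n:ℝ))) = 2*(n:ℝ) := Real.exp_log h2n
    have step1 : (W.card:ℝ) * (2*exp (-((K:ℝ)*ε^2)/8))
        ≤ (2*(n:ℝ)^2) * (2 * exp (-(20*Real.log (2*(n:ℝ)))/8)) := by
      apply mul_le_mul hWc (by linarith) (by positivity) (by positivity)
    have step2 : (2*(n:ℝ)^2) * (2 * exp (-(20*Real.log (2*(n:ℝ)))/8))
        = exp (2*Real.log (2*(n:ℝ)) + -(20*Real.log (2*(n:ℝ)))/8) := by
      rw [Real.exp_add]
      have : exp (2*Real.log (2*(n:ℝ))) = (2*(n:ℝ))^2 := by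
        rw [two_mul, Real.exp_add, hexplog, sq]
      rw [this]
      ring
    have step3 : exp (2*Real.log (2*(n:ℝ)) + -(20*Real.log (2*(n:ℝ)))/8) < 1 := by
      apply Real.exp_lt_one_iff.2  -- maybe name differs
      linarith
    calc (W.card:ℝ) * (2*exp (-((K:ℝ)*ε^2)/8))
        ≤ (2*(n:ℝ)^2) * (2 * exp (-(20*Real.log (2*(n:ℝ)))/8)) := step1
      _ = exp (2*Real.log (2*(n:ℝ)) + -(20*Real.log (2*(n:ℝ)))/8) := step2
      _ < 1 := step3
  obtain ⟨ω, hω⟩ := exists_good (k := K) hε0 hε2 W hsmall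
  have hK0 : 0 < K := by
    rw [hK]
    apply Nat.ceil_pos.2
    positivity
  have hKR : (0:ℝ) < (K:ℝ) := by exact_mod_cast hK0
  set c : ℝ := (Real.sqrt (K:ℝ))⁻¹ with hc
  set gmap : EuclideanSpace ℝ (Fin d) →ₗ[ℝ] EuclideanSpace ℝ (Fin K) :=
    { toFun := fun x => WithLp.toLp 2 (fun j => c * ∑ i, sg (ω j i) * x i)
      map_add' := by
        intro x y
        ext j
        show c * (∑ i, sg (ω j i) * (x i + y i))
          = (c * ∑ i, sg (ω j i) * x i) + (c * ∑ i, sg (ω j i) * y i)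
        rw [show (∑ i, sg (ω j i) * (x i + y i))
          = (∑ i, sg (ω j i) * x i) + ∑ i, sg (ω j i) * y i by
            rw [← Finset.sum_add_distrib]; apply Finset.sum_congr rfl; intros; ring]
        ring
      map_smul' := by
        intro r x
        ext j
        show c * (∑ i, sg (ω j i) * (r * x i)) = r * (c * ∑ i, sg (ω j i) * x i)
        rw [show (∑ i, sg (ω j i) * (r * x i)) = r * ∑ i, sg (ω j i) * x i by
          rw [Finset.mul_sum]; apply Finset.sum_congr rfl; intros; ring]
        ring } with hgmap
  refine ⟨gmap, ?_⟩
  intro u hu v hv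
  have hgu : ∀ (x : EuclideanSpace ℝ (Fin d)) (j : Fin K), gmap x j = c * T x (ω j) :=
    fun x j => rfl
  have hinnerK : ∀ (x y : EuclideanSpace ℝ (Fin K)), (inner ℝ x y : ℝ) = ∑ j, x j * y j := by
    intro x y
    rw [PiLp.inner_apply]
    simp [RCLike.inner_apply, conj_trivial, mul_comm]
  have hinnerD : ∀ (x y : EuclideanSpace ℝ (Fin d)), (inner ℝ x y : ℝ) = ∑ i, x i * y i := by
    intro x y
    rw [PiLp.inner_apply]
    simp [RCLike.inner_apply, conj_trivial, mul_comm]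
  have hnorm : ∀ w ∈ V, ∑ i, (w i : ℝ)^2 = 1 := by
    intro w hw
    have h := hunit w hw
    rw [EuclideanSpace.norm_eq] at h
    have h2 : ∑ i, ‖w i‖^2 = 1 := by
      have := Real.sqrt_eq_one.1 h
      exact this
    calc ∑ i, (w i : ℝ)^2 = ∑ i, ‖w i‖^2 := by
          apply Finset.sum_congr rfl; intros i _
          rw [Real.norm_eq_abs, sq_abs]
      _ = 1 := h2
  have hmemP : u + v ∈ W := by
    rw [hWdef]
    apply Finset.mem_union_left
    exact Finset.mem_image.2 ⟨(u, v), Finset.mem_product.2 ⟨hu, hv⟩, rfl⟩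
  have hmemM : u - v ∈ W := by
    rw [hWdef]
    apply Finset.mem_union_right
    exact Finset.mem_image.2 ⟨(u, v), Finset.mem_product.2 ⟨hu, hv⟩, rfl⟩
  set Sp : ℝ := ∑ i, ((u + v) i)^2 with hSp
  set Sm : ℝ := ∑ i, ((u - v) i)^2 with hSm
  have hgoodP := hω (u + v) hmemP
  have hgoodM := hω (u - v) hmemM
  have hSsum : Sp + Sm = 4 := by
    have e : ∀ i : Fin d, ((u + v) i)^2 + ((u - v) i)^2 = 2 * (u i)^2 + 2 * (v i)^2 := by
      intro i
      have e1 : (u + v) i = u i + v i := rfl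
      have e2 : (u - v) i = u i - v i := rfl
      rw [e1, e2]; ring
    rw [hSp, hSm, ← Finset.sum_add_distrib]
    calc ∑ i, (((u + v) i)^2 + ((u - v) i)^2) = ∑ i, (2 * (u i)^2 + 2 * (v i)^2) :=
          Finset.sum_congr rfl (fun i _ => e i)
      _ = 2 * (∑ i, (u i)^2) + 2 * (∑ i, (v i)^2) := by
          rw [Finset.sum_add_distrib, ← Finset.mul_sum, ← Finset.mul_sum]
      _ = 4 := by rw [hnorm u hu, hnorm v hv]; ring
  have hTadd : ∀ ρ : Fin d → Bool, T (u + v) ρ = T u ρ + T v ρ := by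
    intro ρ
    rw [T, T, T, ← Finset.sum_add_distrib]
    apply Finset.sum_congr rfl
    intro i _
    have e1 : (u + v) i = u i + v i := rfl
    rw [e1]; ring
  have hTsub : ∀ ρ : Fin d → Bool, T (u - v) ρ = T u ρ - T v ρ := by
    intro ρ
    rw [T, T, T, ← Finset.sum_sub_distrib]
    apply Finset.sum_congr rfl
    intro i _
    have e2 : (u - v) i = u i - v i := rfl
    rw [e2]; ring
  have h4a : 4 * (∑ j, T u (ω j) * T v (ω j)) = Q (u + v) ω - Q (u - v) ω := by
    rw [Q, Q, ← Finset.sum_sub_distrib, Finset.mul_sum]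
    apply Finset.sum_congr rfl
    intro j _
    rw [hTadd, hTsub]; ring
  have h4b : 4 * (∑ i, u i * v i) = Sp - Sm := by
    rw [hSp, hSm, ← Finset.sum_sub_distrib, Finset.mul_sum]
    apply Finset.sum_congr rfl
    intro i _
    have e1 : (u + v) i = u i + v i := rfl
    have e2 : (u - v) i = u i - v i := rfl
    rw [e1, e2]; ring
  have hip : (inner ℝ (gmap u) (gmap v) : ℝ) = (K:ℝ)⁻¹ * ∑ j, T u (ω j) * T v (ω j) := by
    rw [hinnerK]
    have hcc : c * c = (K:ℝ)⁻¹ := by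
      rw [hc, ← mul_inv, Real.mul_self_sqrt hKR.le]
    have e : ∀ j : Fin K, gmap u j * gmap v j = (K:ℝ)⁻¹ * (T u (ω j) * T v (ω j)) := by
      intro j
      rw [hgu, hgu, ← hcc]; ring
    rw [Finset.sum_congr rfl (fun j _ => e j), ← Finset.mul_sum]
  have hipd : (inner ℝ u v : ℝ) = ∑ i, u i * v i := hinnerD u v
  have hX : (inner ℝ (gmap u) (gmap v) : ℝ) - (inner ℝ u v : ℝ)
      = ((Q (u + v) ω - (K:ℝ) * Sp) - (Q (u - v) ω - (K:ℝ) * Sm)) / (4*(K:ℝ)) := by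
    rw [hip, hipd]
    have ha : (∑ j, T u (ω j) * T v (ω j)) = (Q (u + v) ω - Q (u - v) ω)/4 := by
      linarith
    have hb : (∑ i, u i * v i) = (Sp - Sm)/4 := by linarith
    rw [ha, hb]
    field_simp
    ring
  rw [hX, abs_div, abs_of_pos (by positivity : (0:ℝ) < 4*(K:ℝ)), div_le_iff₀ (by positivity)]
  have htri : |(Q (u + v) ω - (K:ℝ) * Sp) - (Q (u - v) ω - (K:ℝ) * Sm)|
      ≤ |Q (u + v) ω - (K:ℝ) * Sp| + |Q (u - v) ω - (K:ℝ) * Sm| := abs_sub _ _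
  have hfinal : |Q (u + v) ω - (K:ℝ) * Sp| + |Q (u - v) ω - (K:ℝ) * Sm|
      ≤ ε * ((K:ℝ) * Sp) + ε * ((K:ℝ) * Sm) := add_le_add hgoodP hgoodM
  calc |(Q (u + v) ω - (K:ℝ) * Sp) - (Q (u - v) ω - (K:ℝ) * Sm)|
      ≤ ε * ((K:ℝ) * Sp) + ε * ((K:ℝ) * Sm) := le_trans htri hfinal
    _ = ε * (K:ℝ) * (Sp + Sm) := by ring
    _ = ε * (4*(K:ℝ)) := by rw [hSsum]; ring
end

section
/- Let A and Ã be real (r+1)×(r+1) matrices with ‖Ã − A‖ ≤ δ (operator norm). Then |det(Ã) − det(A)| ≤ (r+1)·δ·max{‖A‖, ‖Ã‖}^r. -/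
open scoped Matrix.Norms.L2Operator

open scoped Matrix


lemma row_sq_sum_le {m : ℕ} (A : Matrix (Fin m) (Fin m) ℝ) (i : Fin m) :
    ∑ j, A i j ^ 2 ≤ ‖A‖ ^ 2 := by
  have hx : ‖(EuclideanSpace.single i (1:ℝ) : EuclideanSpace ℝ (Fin m))‖ = 1 := by
    simp [EuclideanSpace.norm_single]
  have h := Matrix.l2_opNorm_mulVec Aᴴ (EuclideanSpace.single i (1:ℝ))
  rw [Matrix.l2_opNorm_conjTranspose, hx, mul_one] at h
  have hv : (Aᴴ *ᵥ (EuclideanSpace.single i (1:ℝ)) : Fin m → ℝ) = fun j => A i j := by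
    funext j
    simp [Matrix.mulVec, dotProduct, Matrix.conjTranspose_apply,
      EuclideanSpace.single_apply]
  rw [hv] at h
  have hn : ‖(EuclideanSpace.equiv (Fin m) ℝ).symm (fun j => A i j)‖ ^ 2
      = ∑ j, A i j ^ 2 := by
    rw [EuclideanSpace.norm_eq]
    rw [Real.sq_sqrt (by positivity)]
    simp [sq_abs]
  calc ∑ j, A i j ^ 2 = _ ^ 2 := hn.symm
    _ ≤ ‖A‖ ^ 2 := by
        apply pow_le_pow_left₀ (norm_nonneg _) h

lemma trace_eq_sum_eigenvalues {m : ℕ} {A : Matrix (Fin m) (Fin m) ℝ}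
    (hA : A.IsHermitian) : A.trace = ∑ i, hA.eigenvalues i := by
  conv_lhs => rw [hA.spectral_theorem]
  rw [Unitary.conjStarAlgAut_apply, Matrix.trace_mul_cycle, Unitary.coe_star_mul_self, Matrix.one_mul]
  simp [Matrix.trace_diagonal]

lemma abs_det_le_prod_of_rows {m : ℕ} (M : Matrix (Fin m) (Fin m) ℝ) (c : Fin m → ℝ)
    (hc : ∀ i, 0 ≤ c i) (h : ∀ i, ∑ j, M i j ^ 2 ≤ c i ^ 2) :
    |M.det| ≤ ∏ i, c i := by
  rcases Nat.eq_zero_or_pos m with hm | hm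
  · subst hm
    simp [Matrix.det_fin_zero]
  by_cases hzero : ∃ i, c i = 0
  · obtain ⟨i, hi⟩ := hzero
    have hrow : ∀ j, M i j = 0 := by
      intro j
      have h1 := h i
      rw [hi] at h1
      have h2 : (0:ℝ) ≤ ∑ j, M i j ^ 2 := by positivity
      have h3 : ∑ j, M i j ^ 2 = 0 := le_antisymm (by simpa using h1) h2
      have := (Finset.sum_eq_zero_iff_of_nonneg (fun j _ => sq_nonneg (M i j))).mp h3 j
        (Finset.mem_univ j)
      exact pow_eq_zero_iff two_ne_zero |>.mp this
    rw [Matrix.det_eq_zero_of_row_eq_zero i hrow, Finset.prod_eq_zero (Finset.mem_univ i) hi]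
    simp
  push_neg at hzero
  have hcpos : ∀ i, 0 < c i := fun i => (hc i).lt_of_ne' (hzero i)
  set N : Matrix (Fin m) (Fin m) ℝ := Matrix.of fun i j => M i j / c i with hN
  have hMN : M = Matrix.diagonal c * N := by
    ext i j
    simp only [hN, Matrix.diagonal_mul, Matrix.of_apply]
    rw [mul_div_cancel₀ _ (hzero i)]
  -- Gram matrix
  set G : Matrix (Fin m) (Fin m) ℝ := N * Nᴴ with hG
  have hGpsd : G.PosSemidef := Matrix.posSemidef_self_mul_conjTranspose N
  have hH : G.IsHermitian := hGpsd.isHermitian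
  have hGdiag : ∀ i, G i i ≤ 1 := by
    intro i
    have : G i i = ∑ j, N i j ^ 2 := by
      simp [hG, Matrix.mul_apply, Matrix.conjTranspose_apply, sq]
    rw [this]
    have : ∑ j, N i j ^ 2 = (∑ j, M i j ^ 2) / c i ^ 2 := by
      rw [Finset.sum_div]
      refine Finset.sum_congr rfl fun j _ => ?_
      simp [hN, div_pow]
    rw [this, div_le_one (pow_pos (hcpos i) 2)]
    exact h i
  have htr : ∑ i, hH.eigenvalues i ≤ m := by
    rw [← trace_eq_sum_eigenvalues hH]
    calc G.trace = ∑ i, G i i := by rw [Matrix.trace]; rfl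
      _ ≤ ∑ _i : Fin m, (1:ℝ) := Finset.sum_le_sum fun i _ => hGdiag i
      _ = m := by simp
  have hev : ∀ i, 0 ≤ hH.eigenvalues i := hGpsd.eigenvalues_nonneg
  have hdetG : G.det = ∏ i, hH.eigenvalues i := by
    have := hH.det_eq_prod_eigenvalues
    simpa using this
  have hprod_le : ∏ i, hH.eigenvalues i ≤ 1 := by
    have hAMGM := Real.geom_mean_le_arith_mean Finset.univ (fun _ => (1:ℝ))
      hH.eigenvalues (fun _ _ => zero_le_one) (by simp [hm]) (fun i _ => hev i)
    simp only [Real.rpow_one, one_mul, Finset.sum_const, Finset.card_univ,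
      Fintype.card_fin, nsmul_eq_mul, mul_one] at hAMGM
    have h1 : (∏ i, hH.eigenvalues i) ^ ((m:ℝ))⁻¹ ≤ 1 := by
      refine hAMGM.trans ?_
      rw [div_le_one (by exact_mod_cast hm)]
      exact htr
    have hP : (0:ℝ) ≤ ∏ i, hH.eigenvalues i := Finset.prod_nonneg fun i _ => hev i
    have := pow_le_pow_left₀ (Real.rpow_nonneg hP _) h1 m
    rwa [Real.rpow_inv_natCast_pow hP (by omega), one_pow] at this
  have hdetN : |N.det| ≤ 1 := by
    rw [← sq_le_one_iff_abs_le_one]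
    have : N.det ^ 2 = G.det := by
      rw [hG, Matrix.det_mul, Matrix.conjTranspose_eq_transpose_of_trivial,
        Matrix.det_transpose, sq]
    rw [this, hdetG]
    exact hprod_le
  calc |M.det| = (∏ i, c i) * |N.det| := by
        rw [hMN, Matrix.det_mul, Matrix.det_diagonal, abs_mul,
          abs_of_nonneg (Finset.prod_nonneg fun i _ => hc i)]
    _ ≤ (∏ i, c i) * 1 := by
        exact mul_le_mul_of_nonneg_left hdetN (Finset.prod_nonneg fun i _ => hc i)
    _ = ∏ i, c i := mul_one _

/-- Determinant perturbation bound: if `‖Ã − A‖ ≤ δ` in the spectral (ℓ²-operator) norm for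
`(r+1) × (r+1)` real matrices, then `|det Ã − det A| ≤ (r+1)·δ·max{‖A‖, ‖Ã‖}^r`. -/
theorem det_perturbation_bound {r : ℕ} (A At : Matrix (Fin (r + 1)) (Fin (r + 1)) ℝ)
    (δ : ℝ) (h : ‖At - A‖ ≤ δ) :
    |At.det - A.det| ≤ ((r : ℝ) + 1) * δ * max ‖A‖ ‖At‖ ^ r := by
  set μ := max ‖A‖ ‖At‖ with hμ
  have hμ0 : 0 ≤ μ := le_max_of_le_left (norm_nonneg A)
  have hδ0 : 0 ≤ δ := le_trans (norm_nonneg _) h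
  set M : ℕ → Matrix (Fin (r+1)) (Fin (r+1)) ℝ :=
    fun k => Matrix.of fun i j => if (i:ℕ) < k then At i j else A i j with hM
  have hM0 : M 0 = A := by ext i j; simp [hM]
  have hMr : M (r+1) = At := by ext i j; simp [hM, i.isLt]
  have key : ∀ k ∈ Finset.range (r+1),
      |(M (k+1)).det - (M k).det| ≤ δ * μ ^ r := by
    intro k hk
    rw [Finset.mem_range] at hk
    set ik : Fin (r+1) := ⟨k, hk⟩ with hik
    have h1 : M (k+1) = (M k).updateRow ik (fun j => At ik j) := by
      ext i j
      rcases eq_or_ne i ik with rfl | hne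
      · simp [hM, Matrix.updateRow_self, hik]
      · rw [Matrix.updateRow_ne hne]
        have : (i:ℕ) ≠ k := fun hc => hne (Fin.ext hc)
        simp only [hM, Matrix.of_apply]
        rcases lt_or_ge (i:ℕ) k with hlt | hge
        · rw [if_pos hlt, if_pos (by omega)]
        · rw [if_neg (by omega), if_neg (by omega)]
    have h2 : M k = (M k).updateRow ik (fun j => A ik j) := by
      ext i j
      rcases eq_or_ne i ik with rfl | hne
      · simp [hM, Matrix.updateRow_self, hik]
      · rw [Matrix.updateRow_ne hne]
    have hsplit : (M (k+1)).det = ((M k).updateRow ik (fun j => At ik j - A ik j)).det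
        + (M k).det := by
      conv_lhs => rw [h1]
      have : (fun j => At ik j) = (fun j => At ik j - A ik j) + (fun j => A ik j) := by
        funext j; simp
      rw [this, Matrix.det_updateRow_add]
      congr 1
      exact congrArg Matrix.det h2.symm
    rw [hsplit, add_sub_cancel_right]
    set D := (M k).updateRow ik (fun j => At ik j - A ik j) with hD
    have hbound := abs_det_le_prod_of_rows D (fun i => if i = ik then δ else μ)
      (fun i => by split <;> assumption)
      ?_
    · refine hbound.trans ?_
      rw [← Finset.mul_prod_erase Finset.univ _ (Finset.mem_univ ik)]
      rw [if_pos rfl]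
      have : ∏ i ∈ Finset.univ.erase ik, (if i = ik then δ else μ)
          = ∏ i ∈ Finset.univ.erase ik, μ :=
        Finset.prod_congr rfl fun i hi => if_neg (Finset.ne_of_mem_erase hi)
      rw [this, Finset.prod_const, Finset.card_erase_of_mem (Finset.mem_univ ik),
        Finset.card_univ, Fintype.card_fin]
      simp
    · intro i
      by_cases hi : i = ik
      · rw [if_pos hi]
        have hAtA := row_sq_sum_le (At - A) ik
        simp only [Matrix.sub_apply] at hAtA
        calc ∑ j, D i j ^ 2 = ∑ j, (At ik j - A ik j) ^ 2 := by
              exact Finset.sum_congr rfl fun j _ => by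
                rw [hi, hD, Matrix.updateRow_self]
          _ ≤ ‖At - A‖ ^ 2 := hAtA
          _ ≤ δ ^ 2 := pow_le_pow_left₀ (norm_nonneg _) h 2
      · have hne : i ≠ ik := hi
        rw [if_neg hne]
        have hrow : ∀ j, D i j = (M k) i j := by
          intro j; rw [hD, Matrix.updateRow_ne hne]
        rcases lt_or_ge (i:ℕ) k with hlt | hge
        · calc ∑ j, D i j ^ 2 = ∑ j, At i j ^ 2 := by
                refine Finset.sum_congr rfl fun j _ => ?_
                rw [hrow, hM]; simp [hlt]
            _ ≤ ‖At‖ ^ 2 := row_sq_sum_le _ i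
            _ ≤ μ ^ 2 := pow_le_pow_left₀ (norm_nonneg _) (le_max_right _ _) 2
        · calc ∑ j, D i j ^ 2 = ∑ j, A i j ^ 2 := by
                refine Finset.sum_congr rfl fun j _ => ?_
                rw [hrow, hM]; simp [Nat.not_lt_of_ge hge]
            _ ≤ ‖A‖ ^ 2 := row_sq_sum_le _ i
            _ ≤ μ ^ 2 := pow_le_pow_left₀ (norm_nonneg _) (le_max_left _ _) 2
  have htel : At.det - A.det = ∑ k ∈ Finset.range (r+1), ((M (k+1)).det - (M k).det) := by
    rw [Finset.sum_range_sub (fun k => (M k).det), hM0, hMr]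
  rw [htel]
  calc |∑ k ∈ Finset.range (r+1), ((M (k+1)).det - (M k).det)|
      ≤ ∑ k ∈ Finset.range (r+1), |(M (k+1)).det - (M k).det| :=
        Finset.abs_sum_le_sum_abs _ _
    _ ≤ ∑ _k ∈ Finset.range (r+1), δ * μ ^ r := Finset.sum_le_sum key
    _ = ((r:ℝ)+1) * δ * μ ^ r := by
        rw [Finset.sum_const, Finset.card_range]
        push_cast
        ring
end
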